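/- Let G be a torsion-free group in which every centralizer of a nontrivial element is infinite cyclic, and let H ≤ G be a retract of G (i.e., there is a homomorphism φ : G → G with image H and φ(h) = h for all h ∈ H). Then for every g ∈ G, if g^n ∈ H for some n ≥ 1, then g ∈ H. -/

import Mathlib

/-- A monoid is torsion-free if no nontrivial element has finite order
(the definition removed from Mathlib, restored with its old meaning). -/
def Monoid.IsTorsionFree (G : Type*) [Monoid G] : Prop :=
  ∀ g : G, g ≠ 1 → ¬IsOfFinOrder g

/-- Let `G` be a torsion-free group in which the centralizer of every nontrivial
element is infinite cyclic, and let `H ≤ G` be a retract of `G` (there is a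
homomorphism `φ : G → G` with image `H` fixing `H` pointwise). Then `H` is closed
under taking roots: if `gⁿ ∈ H` for some `n ≥ 1`, then `g ∈ H`. -/
theorem retract_root_closed {G : Type*} [Group G]
    (htf : Monoid.IsTorsionFree G)
    (hcent : ∀ g : G, g ≠ 1 → Nonempty (Subgroup.centralizer {g} ≃* Multiplicative ℤ))
    (H : Subgroup G) (φ : G →* G) (hrange : φ.range = H)
    (hfix : ∀ h ∈ H, φ h = h) :
    ∀ (g : G) (n : ℕ), 1 ≤ n → g ^ n ∈ H → g ∈ H := by
  intro g n hn hgn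
  rcases eq_or_ne g 1 with rfl | hg1
  · exact H.one_mem
  -- c = g^n is nontrivial by torsion-freeness
  set c := g ^ n with hc
  have hc1 : c ≠ 1 := by
    intro h
    exact (htf g hg1 (isOfFinOrder_iff_pow_eq_one.2 ⟨n, hn, h⟩)).elim
  obtain ⟨e⟩ := hcent c hc1
  -- φ(g)^n = c
  have hφc : φ g ^ n = c := by
    rw [← map_pow]
    exact hfix _ hgn
  -- both g and φ g centralize c
  have hgmem : g ∈ Subgroup.centralizer {c} := by
    rw [Subgroup.mem_centralizer_singleton_iff, hc]
    exact Commute.self_pow g n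
  have hφmem : φ g ∈ Subgroup.centralizer {c} := by
    rw [Subgroup.mem_centralizer_singleton_iff, ← hφc]
    exact Commute.self_pow (φ g) n
  -- in the centralizer ≅ ℤ, n-th roots are unique
  have hpow : (⟨g, hgmem⟩ : Subgroup.centralizer {c}) ^ n
      = (⟨φ g, hφmem⟩ : Subgroup.centralizer {c}) ^ n := by
    ext
    push_cast
    rw [hφc]
  have := congrArg e hpow
  rw [map_pow, map_pow] at this
  have hza : (n : ℤ) * (e ⟨g, hgmem⟩).toAdd = (n : ℤ) * (e ⟨φ g, hφmem⟩).toAdd := by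
    have h2 := congrArg Multiplicative.toAdd this
    simpa [toAdd_pow, nsmul_eq_mul] using h2
  have heq : e ⟨g, hgmem⟩ = e ⟨φ g, hφmem⟩ := by
    have hn0 : (n : ℤ) ≠ 0 := by exact_mod_cast Nat.one_le_iff_ne_zero.mp hn
    exact Multiplicative.toAdd.injective (mul_left_cancel₀ hn0 hza)
  have : g = φ g := congrArg Subtype.val (e.injective heq)
  rw [this, ← hrange]
  exact ⟨g, rfl⟩
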